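/- Every subgroup of a CSN_k group is CSN_k. -/

import Mathlib

variable {G : Type*} [Group G]

/-- A subgroup is `nil_k`: nilpotent of class at most `k` (i.e. γ_{k+1} = 1). -/
def SubNilK (k : ℕ) (H : Subgroup G) : Prop := lowerCentralSeries H k = ⊥

/-- A subgroup `H ≤ G` is malnormal: `H ∩ g⁻¹Hg = 1` for all `g ∉ H`. -/
def Malnormal (H : Subgroup G) : Prop :=
  ∀ g ∉ H, ∀ y ∈ H, g * y * g⁻¹ ∈ H → y = 1

/-- `H` is a maximal nil_k subgroup of `G`. -/
def MaxNilK (k : ℕ) (H : Subgroup G) : Prop :=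
  SubNilK k H ∧ ∀ K : Subgroup G, SubNilK k K → H ≤ K → K = H

/-- `G` is NT_k: any two nil_k subgroups with nontrivial intersection generate
a nil_k subgroup. -/
def IsNTk (k : ℕ) (G : Type*) [Group G] : Prop :=
  ∀ K₁ K₂ : Subgroup G, SubNilK k K₁ → SubNilK k K₂ → K₁ ⊓ K₂ ≠ ⊥ →
    SubNilK k (K₁ ⊔ K₂)

/-- `G` is CSN_k: every maximal nil_k subgroup is malnormal. -/
def IsCSNk (k : ℕ) (G : Type*) [Group G] : Prop :=
  ∀ H : Subgroup G, MaxNilK k H → Malnormal H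

/-- `C^k_G(x) = { y : ⟨x, y⟩ is nilpotent of class at most k }`. -/
def CkSet (k : ℕ) (x : G) : Set G :=
  { y | SubNilK k (Subgroup.closure {x, y}) }

/-- Relative lower central series of a subgroup, inside the ambient group. -/
def relLCS : ℕ → Subgroup G → Subgroup G
  | 0, K => K
  | n + 1, K => ⁅relLCS n K, K⁆

lemma relLCS_map {G₂ : Type*} [Group G₂] (f : G →* G₂) (K : Subgroup G) :
    ∀ n, (relLCS n K).map f = relLCS n (K.map f)
  | 0 => rfl
  | n + 1 => by
    show ((⁅relLCS n K, K⁆ : Subgroup G).map f) = ⁅relLCS n (K.map f), K.map f⁆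
    rw [Subgroup.map_commutator, relLCS_map f K n]

lemma map_lcs_subtype (K : Subgroup G) :
    ∀ n, (lowerCentralSeries (⊤ : Subgroup ↥K) n).map K.subtype = relLCS n K
  | 0 => by
    show ((⊤ : Subgroup ↥K).map K.subtype) = K
    rw [← MonoidHom.range_eq_map, Subgroup.range_subtype]
  | n + 1 => by
    rw [lowerCentralSeries, Subgroup.lowerCentralSeries_succ]
    show ((⁅lowerCentralSeries (⊤ : Subgroup ↥K) n, ⊤⁆ : Subgroup ↥K).map K.subtype) = _
    rw [Subgroup.map_commutator, map_lcs_subtype K n, ← MonoidHom.range_eq_map,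
      Subgroup.range_subtype]
    rfl

lemma subNilK_iff_relLCS {k : ℕ} {K : Subgroup G} :
    SubNilK k K ↔ relLCS k K = ⊥ := by
  rw [SubNilK, ← map_lcs_subtype K k, lowerCentralSeries, Subgroup.top_subtype_lowerCentralSeries]

lemma relLCS_mono {K N : Subgroup G} (h : K ≤ N) : ∀ n, relLCS n K ≤ relLCS n N
  | 0 => h
  | n + 1 => Subgroup.commutator_mono (relLCS_mono h n) h

lemma subNilK_of_le {k : ℕ} {K N : Subgroup G} (h : K ≤ N) (hN : SubNilK k N) :
    SubNilK k K := by
  rw [subNilK_iff_relLCS] at hN ⊢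
  exact le_bot_iff.mp (hN ▸ relLCS_mono h k)

open scoped commutatorElement in
lemma relLCS_sSup_le {c : Set (Subgroup G)} (hne : c.Nonempty)
    (hdir : DirectedOn (· ≤ ·) c) :
    ∀ n, relLCS n (sSup c) ≤ sSup (relLCS n '' c)
  | 0 => sSup_le_sSup (fun K hK => ⟨K, hK, rfl⟩)
  | n + 1 => by
    show (⁅relLCS n (sSup c), sSup c⁆ : Subgroup G) ≤ _
    rw [Subgroup.commutator_le]
    intro a ha b hb
    have hdir' : DirectedOn (· ≤ ·) (relLCS n '' c) := by
      rintro _ ⟨K₁, hK₁, rfl⟩ _ ⟨K₂, hK₂, rfl⟩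
      obtain ⟨K, hK, h₁, h₂⟩ := hdir K₁ hK₁ K₂ hK₂
      exact ⟨relLCS n K, ⟨K, hK, rfl⟩, relLCS_mono h₁ n, relLCS_mono h₂ n⟩
    have ha' := relLCS_sSup_le hne hdir n ha
    rw [Subgroup.mem_sSup_of_directedOn (hne.image _) hdir'] at ha'
    obtain ⟨_, ⟨K₁, hK₁, rfl⟩, haK₁⟩ := ha'
    rw [Subgroup.mem_sSup_of_directedOn hne hdir] at hb
    obtain ⟨K₂, hK₂, hbK₂⟩ := hb
    obtain ⟨K, hK, h₁, h₂⟩ := hdir K₁ hK₁ K₂ hK₂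
    have : ⁅a, b⁆ ∈ relLCS (n + 1) K :=
      Subgroup.commutator_mem_commutator (relLCS_mono h₁ n haK₁) (h₂ hbK₂)
    exact le_sSup (show relLCS (n + 1) K ∈ relLCS (n + 1) '' c from ⟨K, hK, rfl⟩) this

lemma subNilK_sSup_chain {k : ℕ} {c : Set (Subgroup G)} (hne : c.Nonempty)
    (hc : IsChain (· ≤ ·) c) (hall : ∀ K ∈ c, SubNilK k K) :
    SubNilK k (sSup c) := by
  rw [subNilK_iff_relLCS]
  refine le_bot_iff.mp ((relLCS_sSup_le hne hc.directedOn k).trans (sSup_le ?_))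
  rintro _ ⟨K, hK, rfl⟩
  exact le_of_eq (subNilK_iff_relLCS.mp (hall K hK))

/-- Every nil_k subgroup is contained in a maximal one (Zorn). -/
lemma exists_maxNilK {k : ℕ} (K : Subgroup G) (hK : SubNilK k K) :
    ∃ N : Subgroup G, K ≤ N ∧ MaxNilK k N := by
  obtain ⟨N, hKN, hNs, hNmax⟩ :=
    zorn_le_nonempty₀ {K : Subgroup G | SubNilK k K}
      (by
        intro c hcs hc y hy
        refine ⟨sSup c, ?_, fun _ hz => le_sSup hz⟩
        exact subNilK_sSup_chain ⟨y, hy⟩ hc (fun K hK => hcs hK)) K hK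
  exact ⟨N, hKN, hNs, fun Z hZ hNZ => le_antisymm (hNmax hZ hNZ) hNZ⟩

theorem stmt6 (k : ℕ) {G : Type*} [Group G] (hG : IsCSNk k G)
    (H : Subgroup G) :
    IsCSNk k H := by
  intro M hM
  -- M' : the image of M in G
  set M' : Subgroup G := M.map H.subtype with hM'def
  have hM'nil : SubNilK k M' := by
    have h1 := subNilK_iff_relLCS.mp hM.1
    rw [subNilK_iff_relLCS, hM'def, ← relLCS_map, h1, Subgroup.map_bot]
  obtain ⟨N, hMN, hNnil, hNmax⟩ := exists_maxNilK M' hM'nil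
  have hNmal : Malnormal N := hG N ⟨hNnil, hNmax⟩
  -- M = comap of N in H
  have hcomap_nil : SubNilK k (N.comap H.subtype) := by
    rw [subNilK_iff_relLCS, ← Subgroup.map_eq_bot_iff_of_injective _ H.subtype_injective,
      relLCS_map]
    have hle : (N.comap H.subtype).map H.subtype ≤ N := Subgroup.map_comap_le _ _
    rw [subNilK_iff_relLCS] at hNnil
    exact le_bot_iff.mp (hNnil ▸ relLCS_mono hle k)
  have hMeq : N.comap H.subtype = M :=
    hM.2 (N.comap H.subtype) hcomap_nil (Subgroup.map_le_iff_le_comap.mp hMN)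
  -- malnormality
  intro g hg y hy hconj
  have hgN : (g : G) ∉ N := by
    intro hgN
    exact hg (hMeq ▸ (Subgroup.mem_comap.mpr hgN))
  have hyN : (y : G) ∈ N := hMN ⟨y, hy, rfl⟩
  have hconjN : (g : G) * (y : G) * (g : G)⁻¹ ∈ N := by
    have : ((g * y * g⁻¹ : ↥H) : G) ∈ M' := ⟨g * y * g⁻¹, hconj, rfl⟩
    exact hMN this
  have : (y : G) = 1 := hNmal (g : G) hgN (y : G) hyN hconjN
  exact Subtype.ext this
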